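/- Let (L,R) be a left-right pair of matrices in SL₂(ℕ₀) and let w₁, w₂ ∈ D₀. If orbit(w₁) ∩ orbit(w₂) ≠ ∅, then orbit(w₁) ⊆ orbit(w₂) or orbit(w₂) ⊆ orbit(w₁). -/

import Mathlib

/-- The open first quadrant of "positive" complex numbers. -/
def D0 : Set ℂ := {z : ℂ | 0 < z.re ∧ 0 < z.im}

/-- A 2×2 matrix with nonnegative integer entries has determinant 1. -/
def SL2N (T : Matrix (Fin 2) (Fin 2) ℕ) : Prop :=
  T 0 0 * T 1 1 = T 0 1 * T 1 0 + 1

/-- The Möbius action of such a matrix on a complex number. -/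
noncomputable def act (T : Matrix (Fin 2) (Fin 2) ℕ) (z : ℂ) : ℂ :=
  ((T 0 0 : ℂ) * z + (T 0 1 : ℂ)) / ((T 1 0 : ℂ) * z + (T 1 1 : ℂ))

/-- A pair of non-identity matrices in SL₂(ℕ₀) is a left-right pair if
`L(D₀) ∩ R(D₀) = ∅`. -/
def LeftRightPair (L R : Matrix (Fin 2) (Fin 2) ℕ) : Prop :=
  SL2N L ∧ SL2N R ∧ L ≠ 1 ∧ R ≠ 1 ∧ ∀ z₁ ∈ D0, ∀ z₂ ∈ D0, act L z₁ ≠ act R z₂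

/-- The orbit of w under the semigroup generated by {L, R} (including the
empty product, so w itself belongs to its orbit). -/
def orbit (L R : Matrix (Fin 2) (Fin 2) ℕ) (w : ℂ) : Set ℂ :=
  {z | ∃ l : List (Matrix (Fin 2) (Fin 2) ℕ),
    (∀ T ∈ l, T = L ∨ T = R) ∧ act l.prod w = z}

lemma SL2N_one : SL2N 1 := by simp [SL2N, Matrix.one_apply]

lemma SL2N_mul {A B : Matrix (Fin 2) (Fin 2) ℕ} (hA : SL2N A) (hB : SL2N B) :
    SL2N (A * B) := by
  unfold SL2N at *
  simp only [Matrix.mul_apply, Fin.sum_univ_two]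
  zify at *
  nlinarith [hA, hB, sq_nonneg ((A 0 0 : ℤ) - A 1 1)]

lemma denom_ne_zero {T : Matrix (Fin 2) (Fin 2) ℕ} (hT : SL2N T) {z : ℂ}
    (hz : z ∈ D0) : ((T 1 0 : ℂ) * z + (T 1 1 : ℂ)) ≠ 0 := by
  rcases Nat.eq_zero_or_pos (T 1 0) with h0 | hpos
  · have h1 : T 1 1 ≠ 0 := by
      intro h1; unfold SL2N at hT; rw [h0, h1] at hT; simp at hT
    simp [h0]
    exact_mod_cast h1
  · intro heq
    have him := congrArg Complex.im heq
    simp [Complex.add_im, Complex.mul_im] at him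
    rcases him with h | h
    · omega
    · exact absurd h (ne_of_gt hz.2)

lemma act_one (z : ℂ) : act 1 z = z := by
  simp [act, Matrix.one_apply]

lemma act_mem_D0 {T : Matrix (Fin 2) (Fin 2) ℕ} (hT : SL2N T) {z : ℂ}
    (hz : z ∈ D0) : act T z ∈ D0 := by
  have hd := denom_ne_zero hT hz
  have hns : 0 < Complex.normSq ((T 1 0 : ℂ) * z + (T 1 1 : ℂ)) :=
    Complex.normSq_pos.mpr hd
  have hdet : (T 0 0 : ℝ) * (T 1 1) = (T 0 1) * (T 1 0) + 1 := by exact_mod_cast hT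
  have h0 : (0:ℝ) ≤ (T 0 0 : ℝ) := by positivity
  have h1 : (0:ℝ) ≤ (T 0 1 : ℝ) := by positivity
  have h2 : (0:ℝ) ≤ (T 1 0 : ℝ) := by positivity
  have h3 : (0:ℝ) ≤ (T 1 1 : ℝ) := by positivity
  have key : (T 0 0:ℝ)*(T 1 1)*z.re = (T 0 1)*(T 1 0)*z.re + z.re := by
    linear_combination z.re * hdet
  constructor
  · show 0 < (act T z).re
    rw [act, Complex.div_re, ← add_div]
    apply div_pos _ hns
    simp only [Complex.add_re, Complex.add_im, Complex.mul_re, Complex.mul_im,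
      Complex.natCast_re, Complex.natCast_im]
    nlinarith [key, mul_nonneg (mul_nonneg h0 h2) (mul_self_nonneg z.re),
      mul_nonneg (mul_nonneg h0 h2) (mul_self_nonneg z.im), mul_nonneg h1 h3,
      mul_nonneg (mul_nonneg h1 h2) hz.1.le, hz.1]
  · show 0 < (act T z).im
    rw [act, Complex.div_im]
    have hnum : ((T 0 0 : ℂ) * z + (T 0 1 : ℂ)).im * ((T 1 0 : ℂ) * z + (T 1 1 : ℂ)).re
        - ((T 0 0 : ℂ) * z + (T 0 1 : ℂ)).re * ((T 1 0 : ℂ) * z + (T 1 1 : ℂ)).im = z.im := by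
      simp only [Complex.add_re, Complex.add_im, Complex.mul_re, Complex.mul_im,
        Complex.natCast_re, Complex.natCast_im]
      linear_combination z.im * hdet
    have h2' : 0 < z.im / Complex.normSq ((T 1 0 : ℂ) * z + (T 1 1 : ℂ)) :=
      div_pos hz.2 hns
    rw [← hnum] at h2'
    calc (0:ℝ) < _ := h2'
    _ = _ := by ring

lemma act_mul {A B : Matrix (Fin 2) (Fin 2) ℕ} (hA : SL2N A) (hB : SL2N B)
    {z : ℂ} (hz : z ∈ D0) : act (A * B) z = act A (act B z) := by
  have hdB := denom_ne_zero hB hz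
  have hq := act_mem_D0 hB hz
  have hdA := denom_ne_zero hA hq
  have hdAB := denom_ne_zero (SL2N_mul hA hB) hz
  unfold act at hdA ⊢
  rw [div_eq_div_iff hdAB hdA]
  have hw : ((B 0 0 : ℂ) * z + (B 0 1 : ℂ)) / ((B 1 0 : ℂ) * z + (B 1 1 : ℂ)) *
      ((B 1 0 : ℂ) * z + (B 1 1 : ℂ)) = (B 0 0 : ℂ) * z + (B 0 1 : ℂ) := div_mul_cancel₀ _ hdB
  simp only [Matrix.mul_apply, Fin.sum_univ_two]
  push_cast
  linear_combination ((A 0 1 : ℂ) * (A 1 0 : ℂ) - (A 0 0 : ℂ) * (A 1 1 : ℂ)) * hw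

lemma act_injOn {T : Matrix (Fin 2) (Fin 2) ℕ} (hT : SL2N T) {z₁ z₂ : ℂ}
    (h₁ : z₁ ∈ D0) (h₂ : z₂ ∈ D0) (heq : act T z₁ = act T z₂) : z₁ = z₂ := by
  have hd₁ := denom_ne_zero hT h₁
  have hd₂ := denom_ne_zero hT h₂
  rw [act, act, div_eq_div_iff hd₁ hd₂] at heq
  have hdet : (T 0 0 : ℂ) * (T 1 1) = (T 0 1) * (T 1 0) + 1 := by exact_mod_cast hT
  linear_combination heq - (z₁ - z₂) * hdet

lemma SL2N_prod {L R : Matrix (Fin 2) (Fin 2) ℕ} (hL : SL2N L) (hR : SL2N R) :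
    ∀ l : List (Matrix (Fin 2) (Fin 2) ℕ), (∀ T ∈ l, T = L ∨ T = R) →
    SL2N l.prod := by
  intro l
  induction l with
  | nil => intro _; simpa using SL2N_one
  | cons T t ih =>
    intro hmem
    rw [List.prod_cons]
    have hT : SL2N T := by
      rcases hmem T (by simp) with h | h <;> subst h <;> assumption
    exact SL2N_mul hT (ih fun S hS => hmem S (by simp [hS]))

lemma act_prod_mem_D0 {L R : Matrix (Fin 2) (Fin 2) ℕ} (hL : SL2N L) (hR : SL2N R)
    {l : List (Matrix (Fin 2) (Fin 2) ℕ)} (hl : ∀ T ∈ l, T = L ∨ T = R)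
    {z : ℂ} (hz : z ∈ D0) : act l.prod z ∈ D0 :=
  act_mem_D0 (SL2N_prod hL hR l hl) hz

lemma act_append {L R : Matrix (Fin 2) (Fin 2) ℕ} (hL : SL2N L) (hR : SL2N R)
    {u v : List (Matrix (Fin 2) (Fin 2) ℕ)}
    (hu : ∀ T ∈ u, T = L ∨ T = R) (hv : ∀ T ∈ v, T = L ∨ T = R)
    {z : ℂ} (hz : z ∈ D0) :
    act (u ++ v).prod z = act u.prod (act v.prod z) := by
  rw [List.prod_append]
  exact act_mul (SL2N_prod hL hR u hu) (SL2N_prod hL hR v hv) hz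

lemma orbit_mono {L R : Matrix (Fin 2) (Fin 2) ℕ} (hL : SL2N L) (hR : SL2N R)
    {w₁ w₂ : ℂ} (hw₂ : w₂ ∈ D0) (h : w₁ ∈ orbit L R w₂) :
    orbit L R w₁ ⊆ orbit L R w₂ := by
  obtain ⟨m, hm, hmeq⟩ := h
  rintro x ⟨u, hu, rfl⟩
  refine ⟨u ++ m, ?_, ?_⟩
  · intro T hT
    rcases List.mem_append.mp hT with h' | h'
    · exact hu T h'
    · exact hm T h'
  · rw [act_append hL hR hu hm hw₂, hmeq]

lemma key_lemma {L R : Matrix (Fin 2) (Fin 2) ℕ} (h : LeftRightPair L R) :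
    ∀ u v : List (Matrix (Fin 2) (Fin 2) ℕ),
    (∀ T ∈ u, T = L ∨ T = R) → (∀ T ∈ v, T = L ∨ T = R) →
    ∀ w₁ ∈ D0, ∀ w₂ ∈ D0, act u.prod w₁ = act v.prod w₂ →
    w₁ ∈ orbit L R w₂ ∨ w₂ ∈ orbit L R w₁ := by
  obtain ⟨hL, hR, -, -, hdisj⟩ := h
  intro u
  induction u with
  | nil =>
    intro v _ hv w₁ hw₁ w₂ hw₂ heq
    left
    refine ⟨v, hv, ?_⟩
    rw [← heq, List.prod_nil, act_one]
  | cons T t ih =>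
    intro v hu hv w₁ hw₁ w₂ hw₂ heq
    cases v with
    | nil =>
      right
      refine ⟨T :: t, hu, ?_⟩
      rw [heq, List.prod_nil, act_one]
    | cons S s =>
      have ht : ∀ X ∈ t, X = L ∨ X = R := fun X hX => hu X (by simp [hX])
      have hs : ∀ X ∈ s, X = L ∨ X = R := fun X hX => hv X (by simp [hX])
      have hT : SL2N T := by
        rcases hu T (by simp) with h' | h' <;> subst h' <;> assumption
      have hS : SL2N S := by
        rcases hv S (by simp) with h' | h' <;> subst h' <;> assumption
      have hq₁ : act t.prod w₁ ∈ D0 := act_prod_mem_D0 hL hR ht hw₁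
      have hq₂ : act s.prod w₂ ∈ D0 := act_prod_mem_D0 hL hR hs hw₂
      rw [List.prod_cons, List.prod_cons,
        act_mul hT (SL2N_prod hL hR t ht) hw₁,
        act_mul hS (SL2N_prod hL hR s hs) hw₂] at heq
      have hTS : T = S := by
        rcases hu T (by simp) with h1 | h1 <;> rcases hv S (by simp) with h2 | h2 <;>
          subst h1 <;> subst h2
        · rfl
        · exact absurd heq (hdisj _ hq₁ _ hq₂)
        · exact absurd heq.symm (hdisj _ hq₂ _ hq₁)
        · rfl
      subst hTS
      exact ih s ht hs w₁ hw₁ w₂ hw₂ (act_injOn hT hq₁ hq₂ heq)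

/-- If two orbits intersect, one contains the other. -/
theorem orbits_nested (L R : Matrix (Fin 2) (Fin 2) ℕ)
    (h : LeftRightPair L R) (w₁ : ℂ) (hw₁ : w₁ ∈ D0) (w₂ : ℂ) (hw₂ : w₂ ∈ D0)
    (hint : (orbit L R w₁ ∩ orbit L R w₂).Nonempty) :
    orbit L R w₁ ⊆ orbit L R w₂ ∨ orbit L R w₂ ⊆ orbit L R w₁ := by
  obtain ⟨x, ⟨u, hu, hux⟩, ⟨v, hv, hvx⟩⟩ := hint
  have heq : act u.prod w₁ = act v.prod w₂ := hux.trans hvx.symm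
  rcases key_lemma h u v hu hv w₁ hw₁ w₂ hw₂ heq with h' | h'
  · exact Or.inl (orbit_mono h.1 h.2.1 hw₂ h')
  · exact Or.inr (orbit_mono h.1 h.2.1 hw₁ h')
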